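/- Let N ≥ 1, K ≥ 0 with 2K+1 ≤ N, and φ ∈ ℂ^N with ‖φ‖ = 1. Then the average over Δ uniform on [-1/(2N), 1/(2N)] of ∑_{j=-K}^{K} |φ̂(Δ + j/N)|² equals the quadratic form ∑_{n,m=0}^{N-1} C(n,m) conj(φ[n]) φ[m], where C(n,m) = sin(π(m-n)(2K+1)/N)/(π(m-n)) for m ≠ n and C(n,n) = (2K+1)/N. -/

import Mathlib

open Complex Real intervalIntegral

/-- The prolate (DPSS) kernel `C(n,m)`. -/
noncomputable def prolateC (N K : ℕ) (n m : Fin N) : ℝ :=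
  if m = n then (2 * K + 1 : ℝ) / N
  else Real.sin (Real.pi * (((m : ℤ) - (n : ℤ) : ℤ) : ℝ) * (2 * K + 1) / N) /
    (Real.pi * (((m : ℤ) - (n : ℤ) : ℤ) : ℝ))

private lemma Icc_eq_map (K : ℕ) : Finset.Icc (-(K : ℤ)) (K : ℤ) =
    (Finset.range (2 * K + 1)).map
      ⟨fun i : ℕ => (i : ℤ) - K, id (fun a b h => by simp only [sub_left_inj, Nat.cast_inj] at h; exact h)⟩ := by
  ext j
  simp only [Finset.mem_Icc, Finset.mem_map, Finset.mem_range,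
    Function.Embedding.coeFn_mk]
  constructor
  · rintro ⟨h1, h2⟩
    refine ⟨(j + K).toNat, ?_, ?_⟩ <;> omega
  · rintro ⟨i, hi, rfl⟩
    omega

private lemma telescope (g : ℤ → ℂ) (K : ℕ) :
    ∑ j ∈ Finset.Icc (-(K : ℤ)) (K : ℤ), (g (j + 1) - g j)
      = g (K + 1) - g (-(K : ℤ)) := by
  rw [Icc_eq_map, Finset.sum_map]
  simp only [Function.Embedding.coeFn_mk]
  have h2 : ∀ i : ℕ, g (((i + 1 : ℕ) : ℤ) - K) = g (((i : ℤ) - K) + 1) := by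
    intro i; congr 1; push_cast; ring
  have h := Finset.sum_range_sub (fun i : ℕ => g ((i : ℤ) - K)) (2 * K + 1)
  simp only [h2] at h ⊢
  rw [h]
  congr 1
  · apply congrArg g; push_cast; ring
  · apply congrArg g; push_cast; ring

/-- The key per-pair computation. -/
private lemma key (N K : ℕ) (hN : 1 ≤ N) (d : ℤ) :
    (N : ℂ) * ∑ j ∈ Finset.Icc (-(K : ℤ)) (K : ℤ),
      ∫ Δ in (-(1 / (2 * (N : ℝ))))..(1 / (2 * (N : ℝ))),
        (1 / (N : ℂ)) * Complex.exp (2 * Real.pi * Complex.I * (d : ℂ) * ((Δ : ℂ) + (j : ℂ) / N))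
    = if d = 0 then (((2 * K + 1 : ℝ) / N : ℝ) : ℂ)
      else ((Real.sin (Real.pi * (d : ℝ) * (2 * K + 1) / N) / (Real.pi * (d : ℝ)) : ℝ) : ℂ) := by
  have hNR : (0 : ℝ) < N := by exact_mod_cast Nat.lt_of_lt_of_le Nat.zero_lt_one hN
  have hNC : (N : ℂ) ≠ 0 := by exact_mod_cast hNR.ne'
  by_cases hd : d = 0
  · subst hd
    simp only [if_pos rfl]
    have hint : ∀ j : ℤ,
        (∫ Δ in (-(1 / (2 * (N : ℝ))))..(1 / (2 * (N : ℝ))),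
          (1 / (N : ℂ)) * Complex.exp (2 * Real.pi * Complex.I * ((0 : ℤ) : ℂ) * ((Δ : ℂ) + (j : ℂ) / N)))
        = (1 / (N : ℂ)) * (1 / N : ℝ) := by
      intro j
      simp only [Int.cast_zero, mul_zero, zero_mul, Complex.exp_zero, mul_one]
      rw [intervalIntegral.integral_const]
      rw [Complex.real_smul]
      push_cast
      ring
    simp only [hint, Finset.sum_const, Int.card_Icc]
    have hcard : (((K : ℤ) + 1 - -(K : ℤ)).toNat) = 2 * K + 1 := by omega
    rw [hcard]
    push_cast
    field_simp
    rw [nsmul_eq_mul]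
    push_cast
    field_simp
  · simp only [if_neg hd]
    have hdC : (d : ℂ) ≠ 0 := Int.cast_ne_zero.mpr hd
    have hπC : ((Real.pi : ℝ) : ℂ) ≠ 0 := Complex.ofReal_ne_zero.mpr Real.pi_ne_zero
    set c : ℂ := 2 * Real.pi * Complex.I * (d : ℂ) with hc_def
    have hc : c ≠ 0 := by
      simp only [hc_def]
      exact mul_ne_zero (mul_ne_zero (mul_ne_zero two_ne_zero hπC) Complex.I_ne_zero) hdC
    set g : ℤ → ℂ := fun j => Complex.exp (c * (2 * (j : ℂ) - 1) / (2 * N)) with hg_def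
    have hint : ∀ j : ℤ,
        (∫ Δ in (-(1 / (2 * (N : ℝ))))..(1 / (2 * (N : ℝ))),
          (1 / (N : ℂ)) * Complex.exp (c * ((Δ : ℂ) + (j : ℂ) / N)))
        = (1 / (N : ℂ)) * (1 / c) * (g (j + 1) - g j) := by
      intro j
      have hre : ∀ Δ : ℝ, (1 / (N : ℂ)) * Complex.exp (c * ((Δ : ℂ) + (j : ℂ) / N))
          = ((1 / (N : ℂ)) * Complex.exp (c * ((j : ℂ) / N))) * Complex.exp (c * (Δ : ℂ)) := by
        intro Δ
        have harg : c * ((Δ : ℂ) + (j : ℂ) / N) = c * ((j : ℂ) / N) + c * (Δ : ℂ) := by ring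
        rw [harg, Complex.exp_add]
        ring
      simp only [hre]
      rw [intervalIntegral.integral_const_mul, integral_exp_mul_complex hc]
      have h1 : c * ((1 / (2 * (N : ℝ)) : ℝ) : ℂ) = c / (2 * N) := by
        push_cast; ring
      have h2 : c * ((-(1 / (2 * (N : ℝ))) : ℝ) : ℂ) = -(c / (2 * N)) := by
        push_cast; ring
      rw [h1, h2]
      have h4 : g (j + 1) = Complex.exp (c * ((j : ℂ) / N)) * Complex.exp (c / (2 * N)) := by
        simp only [hg_def]
        rw [← Complex.exp_add]
        congr 1
        push_cast
        field_simp
        ring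
      have h5 : g j = Complex.exp (c * ((j : ℂ) / N)) * Complex.exp (-(c / (2 * N))) := by
        simp only [hg_def]
        rw [← Complex.exp_add]
        congr 1
        push_cast
        field_simp
        ring
      rw [h4, h5]
      field_simp
    simp only [hint, ← Finset.mul_sum, telescope g K]
    have hgK : g ((K : ℤ) + 1) - g (-(K : ℤ))
        = 2 * Complex.sin (((Real.pi * (d : ℝ) * (2 * K + 1) / N : ℝ) : ℂ)) * Complex.I := by
      simp only [hg_def]
      have e1 : c * (2 * (((K : ℤ) + 1 : ℤ) : ℂ) - 1) / (2 * N)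
          = ((Real.pi * (d : ℝ) * (2 * K + 1) / N : ℝ) : ℂ) * Complex.I := by
        simp only [hc_def]; push_cast; field_simp; ring
      have e2 : c * (2 * ((-(K : ℤ) : ℤ) : ℂ) - 1) / (2 * N)
          = -((Real.pi * (d : ℝ) * (2 * K + 1) / N : ℝ) : ℂ) * Complex.I := by
        simp only [hc_def]; push_cast; field_simp; ring
      rw [e1, e2]
      rw [Complex.exp_mul_I, Complex.exp_mul_I, Complex.cos_neg, Complex.sin_neg]
      ring
    rw [hgK]
    simp only [hc_def]
    push_cast
    have hI : Complex.I ≠ 0 := Complex.I_ne_zero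
    field_simp

theorem average_case_kernel (N K : ℕ) (hN : 1 ≤ N) (hK : 2 * K + 1 ≤ N) (φ : Fin N → ℂ)
    (hnorm : ∑ n : Fin N, ‖φ n‖ ^ 2 = 1) :
    (((N : ℝ) * ∫ Δ in (-(1 / (2 * (N : ℝ))))..(1 / (2 * (N : ℝ))),
        ∑ j ∈ Finset.Icc (-(K : ℤ)) (K : ℤ),
          ‖(1 / (Real.sqrt N : ℂ)) *
            ∑ n : Fin N, φ n *
              Complex.exp (2 * Real.pi * Complex.I * (n.val : ℂ) *
                ((Δ + (j : ℝ) / N : ℝ) : ℂ))‖ ^ 2 : ℝ) : ℂ)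
    = ∑ n : Fin N, ∑ m : Fin N,
        ((prolateC N K n m : ℝ) : ℂ) * (starRingEnd ℂ) (φ n) * φ m := by
  have hNR : (0 : ℝ) < N := by exact_mod_cast Nat.lt_of_lt_of_le Nat.zero_lt_one hN
  have hNC : (N : ℂ) ≠ 0 := by exact_mod_cast hNR.ne'
  -- pointwise rewriting of the integrand
  have hpt : ∀ Δ : ℝ, ∀ j : ℤ,
      ((‖(1 / (Real.sqrt N : ℂ)) *
          ∑ n : Fin N, φ n * Complex.exp (2 * Real.pi * Complex.I * (n.val : ℂ) *
            ((Δ + (j : ℝ) / N : ℝ) : ℂ))‖ ^ 2 : ℝ) : ℂ)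
      = ∑ n : Fin N, ∑ m : Fin N, ((starRingEnd ℂ) (φ n) * φ m) *
          ((1 / (N : ℂ)) * Complex.exp (2 * Real.pi * Complex.I *
            ((((m : ℤ) - (n : ℤ) : ℤ)) : ℂ) * ((Δ : ℂ) + ((j : ℤ) : ℂ) / N))) := by
    intro Δ j
    set x : ℂ := ((Δ + (j : ℝ) / N : ℝ) : ℂ) with hx_def
    have hxc : x = (Δ : ℂ) + ((j : ℤ) : ℂ) / N := by
      simp only [hx_def]; push_cast; ring
    rw [Complex.sq_norm, Complex.normSq_eq_conj_mul_self, map_mul, map_sum]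
    have hconj : ((starRingEnd ℂ) (1 / (Real.sqrt N : ℂ))) * (1 / (Real.sqrt N : ℂ))
        = 1 / (N : ℂ) := by
      rw [map_div₀, map_one, Complex.conj_ofReal, div_mul_div_comm, one_mul,
        ← Complex.ofReal_mul, Real.mul_self_sqrt hNR.le, Complex.ofReal_natCast]
    have hterm : ∀ n : Fin N, (starRingEnd ℂ) (φ n * Complex.exp
          (2 * Real.pi * Complex.I * (n.val : ℂ) * x))
        = (starRingEnd ℂ) (φ n) * Complex.exp (-(2 * Real.pi * Complex.I * (n.val : ℂ) * x)) := by
      intro n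
      rw [map_mul, ← Complex.exp_conj]
      congr 2
      simp only [hx_def, map_mul, map_neg, Complex.conj_ofReal, Complex.conj_I, map_ofNat, map_natCast]
      push_cast
      ring
    simp only [hterm]
    rw [mul_mul_mul_comm, hconj, Finset.sum_mul_sum]
    rw [Finset.mul_sum]
    apply Finset.sum_congr rfl
    intro n _
    rw [Finset.mul_sum]
    apply Finset.sum_congr rfl
    intro m _
    rw [hxc]
    rw [mul_mul_mul_comm, ← Complex.exp_add]
    have harg : -(2 * ↑Real.pi * Complex.I * (n.val : ℂ) * ((Δ : ℂ) + ((j : ℤ) : ℂ) / N))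
        + 2 * ↑Real.pi * Complex.I * (m.val : ℂ) * ((Δ : ℂ) + ((j : ℤ) : ℂ) / N)
        = 2 * ↑Real.pi * Complex.I * ((((m : ℤ) - (n : ℤ) : ℤ)) : ℂ) * ((Δ : ℂ) + ((j : ℤ) : ℂ) / N) := by
      push_cast; ring
    rw [harg]
    ring
  -- integrability of the pieces
  have hcont : ∀ (j : ℤ) (n m : Fin N), Continuous (fun Δ : ℝ =>
      ((starRingEnd ℂ) (φ n) * φ m) * ((1 / (N : ℂ)) * Complex.exp (2 * Real.pi * Complex.I *
        ((((m : ℤ) - (n : ℤ) : ℤ)) : ℂ) * ((Δ : ℂ) + ((j : ℤ) : ℂ) / N)))) := by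
    intro j n m
    apply Continuous.mul continuous_const
    apply Continuous.mul continuous_const
    exact Complex.continuous_exp.comp (by continuity)
  rw [Complex.ofReal_mul, ← intervalIntegral.integral_ofReal,
    show (((N : ℝ) : ℂ)) = (N : ℂ) from by norm_cast]
  have hlift : (fun Δ : ℝ => ((∑ j ∈ Finset.Icc (-(K : ℤ)) (K : ℤ),
        ‖(1 / (Real.sqrt N : ℂ)) *
          ∑ n : Fin N, φ n * Complex.exp (2 * Real.pi * Complex.I * (n.val : ℂ) *
            ((Δ + (j : ℝ) / N : ℝ) : ℂ))‖ ^ 2 : ℝ) : ℂ))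
      = fun Δ : ℝ => ∑ j ∈ Finset.Icc (-(K : ℤ)) (K : ℤ), ∑ n : Fin N, ∑ m : Fin N,
          ((starRingEnd ℂ) (φ n) * φ m) * ((1 / (N : ℂ)) * Complex.exp (2 * Real.pi * Complex.I *
            ((((m : ℤ) - (n : ℤ) : ℤ)) : ℂ) * ((Δ : ℂ) + ((j : ℤ) : ℂ) / N))) := by
    funext Δ
    rw [Complex.ofReal_sum]
    exact Finset.sum_congr rfl fun j _ => hpt Δ j
  rw [hlift]
  have hInt2 : ∀ (j : ℤ) (n : Fin N), IntervalIntegrable (fun Δ : ℝ => ∑ m : Fin N,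
      ((starRingEnd ℂ) (φ n) * φ m) * ((1 / (N : ℂ)) * Complex.exp (2 * Real.pi * Complex.I *
        ((((m : ℤ) - (n : ℤ) : ℤ)) : ℂ) * ((Δ : ℂ) + ((j : ℤ) : ℂ) / N))))
      MeasureTheory.volume (-(1 / (2 * (N : ℝ)))) (1 / (2 * (N : ℝ))) := fun j n =>
    (continuous_finset_sum _ fun m _ => hcont j n m).intervalIntegrable _ _
  have hInt1 : ∀ (j : ℤ), IntervalIntegrable (fun Δ : ℝ => ∑ n : Fin N, ∑ m : Fin N,
      ((starRingEnd ℂ) (φ n) * φ m) * ((1 / (N : ℂ)) * Complex.exp (2 * Real.pi * Complex.I *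
        ((((m : ℤ) - (n : ℤ) : ℤ)) : ℂ) * ((Δ : ℂ) + ((j : ℤ) : ℂ) / N))))
      MeasureTheory.volume (-(1 / (2 * (N : ℝ)))) (1 / (2 * (N : ℝ))) := fun j =>
    (continuous_finset_sum _ fun n _ => continuous_finset_sum _ fun m _ => hcont j n m).intervalIntegrable _ _
  rw [intervalIntegral.integral_finset_sum (fun j _ => hInt1 j)]
  have hswap : ∀ j ∈ Finset.Icc (-(K : ℤ)) (K : ℤ),
      (∫ Δ in (-(1 / (2 * (N : ℝ))))..(1 / (2 * (N : ℝ))),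
        ∑ n : Fin N, ∑ m : Fin N,
          ((starRingEnd ℂ) (φ n) * φ m) * ((1 / (N : ℂ)) * Complex.exp (2 * Real.pi * Complex.I *
            ((((m : ℤ) - (n : ℤ) : ℤ)) : ℂ) * ((Δ : ℂ) + ((j : ℤ) : ℂ) / N))))
      = ∑ n : Fin N, ∑ m : Fin N, ((starRingEnd ℂ) (φ n) * φ m) *
          ∫ Δ in (-(1 / (2 * (N : ℝ))))..(1 / (2 * (N : ℝ))),
            ((1 / (N : ℂ)) * Complex.exp (2 * Real.pi * Complex.I *
              ((((m : ℤ) - (n : ℤ) : ℤ)) : ℂ) * ((Δ : ℂ) + ((j : ℤ) : ℂ) / N))) := by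
    intro j _
    rw [intervalIntegral.integral_finset_sum (fun n _ => hInt2 j n)]
    apply Finset.sum_congr rfl
    intro n _
    rw [intervalIntegral.integral_finset_sum (fun m _ =>
      (hcont j n m).intervalIntegrable _ _)]
    apply Finset.sum_congr rfl
    intro m _
    rw [intervalIntegral.integral_const_mul]
  rw [Finset.sum_congr rfl hswap]
  rw [Finset.sum_comm]
  rw [Finset.mul_sum]
  apply Finset.sum_congr rfl
  intro n _
  rw [Finset.sum_comm, Finset.mul_sum]
  apply Finset.sum_congr rfl
  intro m _
  have hrearr : (N : ℂ) * ∑ j ∈ Finset.Icc (-(K : ℤ)) (K : ℤ),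
      ((starRingEnd ℂ) (φ n) * φ m) *
        ∫ Δ in (-(1 / (2 * (N : ℝ))))..(1 / (2 * (N : ℝ))),
          ((1 / (N : ℂ)) * Complex.exp (2 * Real.pi * Complex.I *
            ((((m : ℤ) - (n : ℤ) : ℤ)) : ℂ) * ((Δ : ℂ) + ((j : ℤ) : ℂ) / N)))
      = ((starRingEnd ℂ) (φ n) * φ m) * ((N : ℂ) * ∑ j ∈ Finset.Icc (-(K : ℤ)) (K : ℤ),
          ∫ Δ in (-(1 / (2 * (N : ℝ))))..(1 / (2 * (N : ℝ))),
            ((1 / (N : ℂ)) * Complex.exp (2 * Real.pi * Complex.I *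
              ((((m : ℤ) - (n : ℤ) : ℤ)) : ℂ) * ((Δ : ℂ) + ((j : ℤ) : ℂ) / N)))) := by
    rw [← Finset.mul_sum]
    ring
  rw [hrearr, key N K hN ((m : ℤ) - (n : ℤ))]
  have hd0 : ((m : ℤ) - (n : ℤ) = 0) ↔ m = n := by
    constructor
    · intro h
      have : (m : ℤ) = (n : ℤ) := by omega
      exact Fin.ext (by exact_mod_cast this)
    · rintro rfl; ring
  unfold prolateC
  by_cases hmn : m = n
  · rw [if_pos (hd0.mpr hmn), if_pos hmn]
    push_cast
    ring
  · rw [if_neg (fun h => hmn (hd0.mp h)), if_neg hmn]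
    push_cast
    ring
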